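/- Let V be a pseudovariety of semigroups containing Sl, let (S_i)_{i∈I} be a nonempty family of nontrivial (having at least two elements) pro-V semigroups, let S = ∐^V_{i∈I} S_i with natural mappings φ_i : S_i → S, and let A be a subset of S such that the subsemigroup of S generated by A is dense. Then for every i∈I, the subsemigroup of S_i generated by φ_i⁻¹(A) is dense in S_i. -/

import Mathlib

set_option autoImplicit false

/-! ### General notions: topological semigroups, pseudovarieties, pro-V semigroups -/

/-- Continuity of a map into a type regarded with the discrete topology. -/
def ContinuousDisc {S : Type} [TopologicalSpace S] {T : Type} (f : S → T) : Prop :=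
  @Continuous S T _ ⊥ f

/-- A pseudovariety of semigroups: a class of finite semigroups closed under
homomorphic images, subsemigroups and finite direct products. -/
structure Pseudovariety : Type 1 where
  Mem : ∀ (S : Type) [Semigroup S], Prop
  finite : ∀ (S : Type) [Semigroup S], Mem S → Finite S
  closed_hom : ∀ (S T : Type) [Semigroup S] [Semigroup T] (f : S →ₙ* T),
    Mem S → Function.Surjective f → Mem T
  closed_sub : ∀ (S T : Type) [Semigroup S] [Semigroup T] (f : T →ₙ* S),
    Mem S → Function.Injective f → Mem T
  closed_prod : ∀ (ι : Type) [Finite ι] (S : ι → Type) [∀ i, Semigroup (S i)],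
    (∀ i, Mem (S i)) → Mem (∀ i, S i)

/-- A bundled member of a pseudovariety `V` (a finite semigroup belonging to `V`),
always regarded as carrying the discrete topology. -/
structure SgrIn (V : Pseudovariety) : Type 1 where
  carrier : Type
  [str : Semigroup carrier]
  mem : V.Mem carrier

attribute [instance] SgrIn.str

/-- A (bundled) topological semigroup. -/
structure TopSgr : Type 1 where
  carrier : Type
  [str : Semigroup carrier]
  [top : TopologicalSpace carrier]

attribute [instance] TopSgr.str TopSgr.top

/-- A finite semigroup regarded as a topological semigroup with the discrete topology. -/
def discTopSgr (S : Type) [Semigroup S] : TopSgr :=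
  @TopSgr.mk S _ ⊥

/-- A pro-V semigroup: a compact Hausdorff topological semigroup that is residually `V`. -/
def IsProV (V : Pseudovariety) (S : TopSgr) : Prop :=
  CompactSpace S.carrier ∧ T2Space S.carrier ∧ ContinuousMul S.carrier ∧
    ∀ x y : S.carrier, x ≠ y → ∃ (F : SgrIn V) (f : S.carrier →ₙ* F.carrier),
      ContinuousDisc ⇑f ∧ f x ≠ f y

/-- A profinite semigroup: a compact Hausdorff totally disconnected topological semigroup. -/
def IsProfiniteSgr (S : TopSgr) : Prop :=
  CompactSpace S.carrier ∧ T2Space S.carrier ∧ TotallyDisconnectedSpace S.carrier ∧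
    ContinuousMul S.carrier

/-- `C`, together with the continuous homomorphisms `φ i`, is a `V`-coproduct of the
family `S` of pro-`V` semigroups. -/
structure IsCoproduct (V : Pseudovariety) {I : Type} (S : I → TopSgr)
    (C : TopSgr) (φ : ∀ i, (S i).carrier →ₙ* C.carrier) : Prop where
  proV : IsProV V C
  cont : ∀ i, Continuous ⇑(φ i)
  universal : ∀ (T : TopSgr), IsProV V T →
    ∀ ψ : ∀ i, (S i).carrier →ₙ* T.carrier, (∀ i, Continuous ⇑(ψ i)) →
      ∃! Ψ : C.carrier →ₙ* T.carrier, Continuous ⇑Ψ ∧ ∀ i, Ψ.comp (φ i) = ψ i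

/-- `P`, together with the homomorphisms `e i`, is a free product (coproduct in the
category of semigroups) of the family `S`. -/
structure IsFreeProduct {I : Type} (S : I → Type) [∀ i, Semigroup (S i)]
    (P : Type) [Semigroup P] (e : ∀ i, S i →ₙ* P) : Prop where
  universal : ∀ (T : Type) [Semigroup T] (f : ∀ i, S i →ₙ* T),
    ∃! F : P →ₙ* T, ∀ i, F.comp (e i) = f i

/-! ### Particular pseudovarieties and related notions -/

/-- `V` contains the pseudovariety `Sl` of finite semilattices. -/
def ContainsSl (V : Pseudovariety) : Prop :=
  ∀ (S : Type) [Semigroup S] [Finite S],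
    (∀ x y : S, x * y = y * x) → (∀ x : S, x * x = x) → V.Mem S

/-- Green's `J`-preorder: `s ≤_J t`, i.e. `s ∈ S^I t S^I`. -/
def JBelow {S : Type} [Semigroup S] (s t : S) : Prop :=
  ∃ x y : WithOne S, x * (t : WithOne S) * y = (s : WithOne S)

/-- `V` contains the pseudovariety `J` of finite `J`-trivial semigroups. -/
def ContainsJ (V : Pseudovariety) : Prop :=
  ∀ (S : Type) [Semigroup S] [Finite S],
    (∀ s t : S, JBelow s t → JBelow t s → s = t) → V.Mem S

/-- The preimage of an idempotent under a semigroup homomorphism, as a subsemigroup. -/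
def fiberSub {S T : Type} [Semigroup S] [Semigroup T] (ψ : S →ₙ* T) (e : T)
    (he : e * e = e) : Subsemigroup S where
  carrier := ⇑ψ ⁻¹' {e}
  mul_mem' := by
    intro a b ha hb
    simp only [Set.mem_preimage, Set.mem_singleton_iff] at *
    rw [map_mul, ha, hb, he]

/-- The set of products of `n+1` elements of a semigroup (so `nthProds S 0 = S`). -/
def nthProds (S : Type) [Semigroup S] : ℕ → Set S
  | 0 => Set.univ
  | n + 1 => {x | ∃ a y, y ∈ nthProds S n ∧ x = a * y}

/-- A nilpotent semigroup: it has a zero `z` and some power of the semigroup is `{z}`. -/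
def IsNilpotentSgr (S : Type) [Semigroup S] : Prop :=
  ∃ z : S, (∀ x : S, z * x = z ∧ x * z = z) ∧ ∃ n : ℕ, nthProds S n ⊆ {z}

/-- A generator of the Mal'cev product `N ⓜ V`: a finite semigroup admitting a surjective
homomorphism onto a member of `V` all of whose idempotent fibers are nilpotent. -/
def NMalcevGen (V : Pseudovariety) (S : Type) [Semigroup S] : Prop :=
  Finite S ∧ ∃ (T : SgrIn V) (ψ : S →ₙ* T.carrier), Function.Surjective ψ ∧
    ∀ (e : T.carrier) (he : e * e = e), IsNilpotentSgr (fiberSub ψ e he)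

/-- The equality `N ⓜ V = V`: `V` coincides with the smallest pseudovariety containing
all finite semigroups admitting an `N`-morphism onto some member of `V`. -/
def NMalcevFixed (V : Pseudovariety) : Prop :=
  ∀ (S : Type) [Semigroup S] [Finite S],
    V.Mem S ↔ ∀ U : Pseudovariety,
      (∀ (S' : Type) [Semigroup S'], NMalcevGen V S' → U.Mem S') → U.Mem S

/-- A completely simple semigroup: simple with a primitive idempotent. -/
def IsCompletelySimple (S : Type) [Semigroup S] : Prop :=
  (∀ J : Set S, J.Nonempty → (∀ s x : S, x ∈ J → s * x ∈ J ∧ x * s ∈ J) → J = Set.univ) ∧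
  ∃ e : S, e * e = e ∧ ∀ f : S, f * f = f → e * f = f → f * e = f → f = e

/-- An equidivisible semigroup. -/
def Equidivisible (S : Type) [Semigroup S] : Prop :=
  ∀ u v x y : S, u * v = x * y →
    ∃ t : WithOne S,
      ((x : WithOne S) = (u : WithOne S) * t ∧ t * (y : WithOne S) = (v : WithOne S)) ∨
      ((x : WithOne S) * t = (u : WithOne S) ∧ (y : WithOne S) = t * (v : WithOne S))

/-! ### The two-sided Karnofsky–Rhodes expansion -/

/-- Vertices of the two-sided Cayley graph of `T`: pairs of elements of `T^I`. -/
abbrev KRVtx (T : Type) : Type := WithOne T × WithOne T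

/-- Edges of the two-sided Cayley graph: (source, label, target). -/
abbrev KREdge (A T : Type) : Type := KRVtx T × A × KRVtx T

/-- The image in `T^I` of a letter. -/
def letterImg {A T : Type} [Semigroup T] (ψ : FreeSemigroup A →ₙ* T) (a : A) : WithOne T :=
  (ψ (FreeSemigroup.of a) : WithOne T)

/-- The image in `T^I` of a (possibly empty) word. -/
def wordImg {A T : Type} [Semigroup T] (ψ : FreeSemigroup A →ₙ* T) (w : List A) : WithOne T :=
  (w.map (letterImg ψ)).prod

/-- `e` is an edge of the two-sided Cayley graph `Γ_ψ`. -/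
def IsKREdge {A T : Type} [Semigroup T] (ψ : FreeSemigroup A →ₙ* T) (e : KREdge A T) : Prop :=
  e.1.1 * letterImg ψ e.2.1 = e.2.2.1 ∧ e.1.2 = letterImg ψ e.2.1 * e.2.2.2

/-- One step along an edge of `Γ_ψ` (used to define directed paths). -/
def KRStep {A T : Type} [Semigroup T] (ψ : FreeSemigroup A →ₙ* T) (v w : KRVtx T) : Prop :=
  ∃ a : A, v.1 * letterImg ψ a = w.1 ∧ v.2 = letterImg ψ a * w.2

/-- A transition edge of `Γ_ψ`: an edge from whose target there is no directed path
back to its source. -/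
def IsTransEdge {A T : Type} [Semigroup T] (ψ : FreeSemigroup A →ₙ* T) (e : KREdge A T) : Prop :=
  IsKREdge ψ e ∧ ¬ Relation.ReflTransGen (KRStep ψ) e.2.2 e.1

/-- The list of letters of an element of the free semigroup. -/
def letters {A : Type} (u : FreeSemigroup A) : List A := u.head :: u.tail

/-- The set of edges of the path `p_u` of `Γ_ψ` from `(I, ψ u)` to `(ψ u, I)` labeled by `u`. -/
def pathEdges {A T : Type} [Semigroup T] (ψ : FreeSemigroup A →ₙ* T) (u : FreeSemigroup A) :
    Set (KREdge A T) :=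
  {e | ∃ (w₁ w₂ : List A) (a : A), letters u = w₁ ++ a :: w₂ ∧
    e = ((wordImg ψ w₁, wordImg ψ (a :: w₂)), a, (wordImg ψ (w₁ ++ [a]), wordImg ψ w₂))}

/-- The set `T(p_u)` of transition edges of `Γ_ψ` occurring in the path `p_u`. -/
def transEdges {A T : Type} [Semigroup T] (ψ : FreeSemigroup A →ₙ* T) (u : FreeSemigroup A) :
    Set (KREdge A T) :=
  {e ∈ pathEdges ψ u | IsTransEdge ψ e}

/-- A realization of the two-sided Karnofsky–Rhodes expansion of `ψ : A⁺ → T`: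
a semigroup `K = T_ψ^KR` together with the projection `ψ^KR : A⁺ → K`, which is onto and
identifies `u` and `v` exactly when `ψ u = ψ v` and `T(p_u) = T(p_v)`, and the canonical
homomorphism `π : T_ψ^KR → T` with `π ∘ ψ^KR = ψ`. -/
structure KRExp {A T : Type} [Semigroup T] (ψ : FreeSemigroup A →ₙ* T) : Type 1 where
  K : Type
  [strK : Semigroup K]
  [finK : Finite K]
  ψKR : FreeSemigroup A →ₙ* K
  π : K →ₙ* T
  surj : Function.Surjective ⇑ψKR
  ker : ∀ u v : FreeSemigroup A, ψKR u = ψKR v ↔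
    (ψ u = ψ v ∧ transEdges ψ u = transEdges ψ v)
  proj : π.comp ψKR = ψ

attribute [instance] KRExp.strK KRExp.finK

/-- The data of a two-sided Karnofsky–Rhodes expansion of a finite semigroup `T`:
a finite alphabet `A`, an onto homomorphism `ψ : A⁺ → T`, and a realization `T_ψ^KR`. -/
structure KRData (T : Type) [Semigroup T] : Type 1 where
  A : Type
  [finA : Finite A]
  ψ : FreeSemigroup A →ₙ* T
  surjψ : Function.Surjective ⇑ψ
  E : KRExp ψ

attribute [instance] KRData.finA

/-- `V` is closed under two-sided Karnofsky–Rhodes expansion. -/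
def ClosedUnderKR (V : Pseudovariety) : Prop :=
  ∀ (A T : Type) [Finite A] [Semigroup T], V.Mem T →
    ∀ (ψ : FreeSemigroup A →ₙ* T), Function.Surjective ⇑ψ →
      ∀ E : KRExp ψ, V.Mem E.K

/-! ### KR-covers -/

/-- `S` is a KR-cover of the finite semigroup `T`. -/
def IsKRCoverOf (S : TopSgr) (T : Type) [Semigroup T] [Finite T] : Prop :=
  (∃ φ : S.carrier →ₙ* T, ContinuousDisc ⇑φ ∧ Function.Surjective ⇑φ) ∧
  ∀ φ : S.carrier →ₙ* T, ContinuousDisc ⇑φ → Function.Surjective ⇑φ →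
    ∃ (D : KRData T) (φψ : S.carrier →ₙ* D.E.K),
      ContinuousDisc ⇑φψ ∧ D.E.π.comp φψ = φ

/-- `S` is a KR-cover: a KR-cover of each of its finite continuous homomorphic images. -/
def IsKRCover (S : TopSgr) : Prop :=
  ∀ (T : Type) [Semigroup T] [Finite T],
    (∃ φ : S.carrier →ₙ* T, ContinuousDisc ⇑φ ∧ Function.Surjective ⇑φ) →
    IsKRCoverOf S T

/-- `S` is `V`-projective. -/
def IsVProjective (V : Pseudovariety) (S : TopSgr) : Prop :=
  IsProV V S ∧ ∀ (T R : TopSgr), IsProV V T → IsProV V R →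
    ∀ (f : S.carrier →ₙ* T.carrier) (g : R.carrier →ₙ* T.carrier),
      Continuous ⇑f → Continuous ⇑g → Function.Surjective ⇑g →
        ∃ f' : S.carrier →ₙ* R.carrier, Continuous ⇑f' ∧ g.comp f' = f

/-! ### Strong KR-covers and letter super-cancellativity -/

/-- `κ : A → S` is a generating mapping: its image generates a dense subsemigroup. -/
def GeneratingMap {A : Type} (S : TopSgr) (κ : A → S.carrier) : Prop :=
  Dense (Subsemigroup.closure (Set.range κ) : Set S.carrier)

/-- The homomorphism `A⁺ → T` extending `a ↦ φ (κ a)`. -/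
def liftGen {A : Type} (S : TopSgr) (κ : A → S.carrier) {T : Type} [Semigroup T]
    (φ : S.carrier →ₙ* T) : FreeSemigroup A →ₙ* T :=
  FreeSemigroup.lift (fun a => φ (κ a))

/-- `S` is a strong KR-cover of the finite semigroup `T` with respect to the
generating mapping `κ`. -/
def IsStrongKRCoverOfWrt {A : Type} (S : TopSgr) (κ : A → S.carrier)
    (T : Type) [Semigroup T] [Finite T] : Prop :=
  ∀ φ : S.carrier →ₙ* T, ContinuousDisc ⇑φ → Function.Surjective ⇑φ →
    ∃ (E : KRExp (liftGen S κ φ)) (φκ : S.carrier →ₙ* E.K),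
      ContinuousDisc ⇑φκ ∧ E.π.comp φκ = φ ∧
      ∀ a : A, φκ (κ a) = E.ψKR (FreeSemigroup.of a)

/-- `S` is a strong KR-cover of the finite semigroup `T` (with respect to some
generating mapping with finite domain). -/
def IsStrongKRCoverOf (S : TopSgr) (T : Type) [Semigroup T] [Finite T] : Prop :=
  ∃ A : Type, Finite A ∧ ∃ κ : A → S.carrier, GeneratingMap S κ ∧
    IsStrongKRCoverOfWrt S κ T

/-- `S` is a strong KR-cover: a strong KR-cover of each of its finite continuous
homomorphic images. -/
def IsStrongKRCover (S : TopSgr) : Prop :=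
  ∀ (T : Type) [Semigroup T] [Finite T],
    (∃ φ : S.carrier →ₙ* T, ContinuousDisc ⇑φ ∧ Function.Surjective ⇑φ) →
    IsStrongKRCoverOf S T

/-- `S` is letter super-cancellative with respect to the subset `A` of `S`. -/
def IsLSC (S : TopSgr) (A : Set S.carrier) : Prop :=
  ∀ a ∈ A, ∀ b ∈ A, ∀ u v : WithOne S.carrier,
    (u * (a : WithOne S.carrier) = v * (b : WithOne S.carrier) → a = b ∧ u = v) ∧
    ((a : WithOne S.carrier) * u = (b : WithOne S.carrier) * v → a = b ∧ u = v)

/-! ### `S^I` and inverse limits -/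

/-- The sum topology on `S^I = S ∪ {I}`: the point `I` is isolated and `S` keeps
its topology. -/
def withOneTopology (S : Type) [TopologicalSpace S] : TopologicalSpace (WithOne S) where
  IsOpen V := IsOpen ((fun s : S => (s : WithOne S)) ⁻¹' V)
  isOpen_univ := by simp
  isOpen_inter := by
    intro U V hU hV
    rw [Set.preimage_inter]
    exact hU.inter hV
  isOpen_sUnion := by
    intro s hs
    rw [Set.preimage_sUnion]
    exact isOpen_biUnion hs

/-- `S^I` as a topological semigroup (in fact a monoid): `S` with an isolated identity
adjoined. -/
def withOneTopSgr (S : TopSgr) : TopSgr :=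
  @TopSgr.mk (WithOne S.carrier) _ (withOneTopology S.carrier)

/-- The inverse limit of a family of topological semigroups, as a subsemigroup of
the product. -/
def invLimSub {I : Type} [Preorder I] (S : I → TopSgr)
    (f : ∀ i j, j ≤ i → ((S i).carrier →ₙ* (S j).carrier)) :
    Subsemigroup (∀ i, (S i).carrier) where
  carrier := {x | ∀ i j (h : j ≤ i), f i j h (x i) = x j}
  mul_mem' := by
    intro a b ha hb i j h
    simp only [Pi.mul_apply, map_mul, ha i j h, hb i j h]

/-- The inverse limit as a topological semigroup (with the topology induced from the
product topology). -/
def invLimTopSgr {I : Type} [Preorder I] (S : I → TopSgr)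
    (f : ∀ i j, j ≤ i → ((S i).carrier →ₙ* (S j).carrier)) : TopSgr :=
  TopSgr.mk (invLimSub S f)
/-! ### Auxiliary material for Statement 2 -/

private def boolFam (F G : Type) : Bool → Type := fun b => Bool.rec G F b

private instance boolFamSemigroup (F G : Type) [Semigroup F] [Semigroup G] :
    ∀ b, Semigroup (boolFam F G b)
  | true => ‹Semigroup F›
  | false => ‹Semigroup G›

lemma Pseudovariety.mem_pair (V : Pseudovariety) {F G : Type} [Semigroup F] [Semigroup G]
    (hF : V.Mem F) (hG : V.Mem G) : V.Mem (F × G) := by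
  have hpi : V.Mem (∀ b, boolFam F G b) :=
    V.closed_prod Bool (boolFam F G) (fun b => by cases b <;> [exact hG; exact hF])
  exact V.closed_hom _ _
    ⟨fun p => (p true, p false), fun p q => rfl⟩
    hpi
    (fun x => ⟨fun b => Bool.rec x.2 x.1 b, rfl⟩)

lemma aux_withZero_mem (V : Pseudovariety) (hSl : ContainsSl V) (F : Type) [Semigroup F]
    [Nonempty F] (hF : V.Mem F) : V.Mem (WithZero F) := by
  classical
  haveI : Finite (WithZero Unit) := Finite.of_equiv (Option Unit) (Equiv.refl _)
  have memU : V.Mem (WithZero Unit) := by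
    refine hSl _ (fun x y => ?_) (fun x => ?_)
    · induction x with
      | zero => rw [zero_mul, mul_zero]
      | coe a =>
        induction y with
        | zero => rw [zero_mul, mul_zero]
        | coe b => rfl
    · induction x with
      | zero => rw [mul_zero]
      | coe a => rfl
  have memP : V.Mem (F × WithZero Unit) := V.mem_pair hF memU
  refine V.closed_hom _ _ ⟨fun x => Option.map (fun _ => x.1) x.2, ?_⟩ memP ?_
  · rintro ⟨a, x⟩ ⟨b, y⟩
    show Option.map (fun _ => a * b) (x * y)
      = Option.map₂ (· * ·) (Option.map (fun _ => a) x) (Option.map (fun _ => b) y)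
    induction x with
    | zero => rfl
    | coe u => induction y with
      | zero => rfl
      | coe v => rfl
  · intro z
    induction z with
    | zero => exact ⟨(Classical.arbitrary F, 0), rfl⟩
    | coe s => exact ⟨(s, (() : Unit)), rfl⟩

/-- Separation of a point from a closed set by a single continuous homomorphism
to a member of `V`. -/
lemma aux_sep (V : Pseudovariety) (Sg : TopSgr) (hp : IsProV V Sg)
    (K : Set Sg.carrier) (hK : IsClosed K) (x₀ : Sg.carrier) (hx : x₀ ∉ K) :
    ∃ (F : SgrIn V) (f : Sg.carrier →ₙ* F.carrier),
      ContinuousDisc ⇑f ∧ ∀ d ∈ K, f x₀ ≠ f d := by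
  obtain ⟨hc, ht2, hm, hres⟩ := hp
  haveI := hc
  have hne : ∀ d : K, x₀ ≠ (d : Sg.carrier) := fun d hd => hx (by rw [hd]; exact d.2)
  choose F f hfc hfne using fun d : K => hres x₀ d (hne d)
  have hUopen : ∀ d : K, IsOpen (⇑(f d) ⁻¹' {f d (d : Sg.carrier)}) := by
    intro d
    letI : TopologicalSpace (F d).carrier := ⊥
    haveI : DiscreteTopology (F d).carrier := ⟨rfl⟩
    exact IsOpen.preimage (hfc d) (isOpen_discrete _)
  have hcover : K ⊆ ⋃ d : K, ⇑(f d) ⁻¹' {f d (d : Sg.carrier)} :=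
    fun y hy => Set.mem_iUnion.mpr ⟨⟨y, hy⟩, rfl⟩
  obtain ⟨t, ht⟩ := (hK.isCompact).elim_finite_subcover _ hUopen hcover
  refine ⟨⟨∀ d : t, (F ↑d).carrier, V.closed_prod _ _ fun d => (F ↑d).mem⟩,
    ⟨fun x d => f ↑d x, fun x y => funext fun d => map_mul (f ↑d) x y⟩, ?_, ?_⟩
  · show @Continuous _ _ _ ⊥ (fun x (d : t) => f ↑d x)
    letI : TopologicalSpace (∀ d : t, (F ↑d).carrier) := ⊥
    haveI : DiscreteTopology (∀ d : t, (F ↑d).carrier) := ⟨rfl⟩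
    rw [continuous_discrete_rng]
    intro b
    have heq : ((fun x (d : t) => f ↑d x) ⁻¹' {b}) = ⋂ d : t, ⇑(f ↑d) ⁻¹' {b d} := by
      ext x
      simp [funext_iff]
    rw [heq]
    refine isOpen_iInter_of_finite fun d => ?_
    letI : TopologicalSpace (F ↑d).carrier := ⊥
    haveI : DiscreteTopology (F ↑d).carrier := ⟨rfl⟩
    exact IsOpen.preimage (hfc ↑d) (isOpen_discrete _)
  · intro d hd hEq
    obtain ⟨d', hd't, hdU⟩ := Set.mem_iUnion₂.mp (ht hd)
    have h1 : f d' x₀ = f d' d := congrFun hEq ⟨d', hd't⟩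
    exact hfne d' (h1.trans hdU)

/-- A `V`-coproduct is topologically generated by the union of the images of the factors. -/
lemma aux_coproduct_gen (V : Pseudovariety) {I : Type} (S : I → TopSgr)
    (C : TopSgr) (φ : ∀ i, (S i).carrier →ₙ* C.carrier) (h : IsCoproduct V S C φ) :
    Dense (Subsemigroup.closure (⋃ j, Set.range ⇑(φ j)) : Set C.carrier) := by
  obtain ⟨hcC, ht2C, hmC, hresC⟩ := h.proV
  haveI := hcC; haveI := ht2C; haveI := hmC
  set N : Subsemigroup C.carrier := Subsemigroup.closure (⋃ j, Set.range ⇑(φ j)) with hN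
  set K : Subsemigroup C.carrier := N.topologicalClosure with hK
  let C' : TopSgr := { carrier := ↥K }
  have hproV' : IsProV V C' := by
    refine ⟨?_, ?_, ?_, ?_⟩
    · exact isCompact_iff_compactSpace.mp
        (IsClosed.isCompact N.isClosed_topologicalClosure)
    · exact inferInstance
    · exact inferInstance
    · intro x y hxy
      obtain ⟨Fq, fq, hfc, hfneq⟩ := hresC ↑x ↑y (fun hc => hxy (Subtype.ext hc))
      exact ⟨Fq, fq.comp (MulMemClass.subtype K),
        @Continuous.comp ↥K C.carrier Fq.carrier _ _ ⊥ _ _ hfc continuous_subtype_val, hfneq⟩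
  have hmem : ∀ j x, φ j x ∈ K := fun j x =>
    N.le_topologicalClosure (Subsemigroup.subset_closure
      (Set.mem_iUnion.mpr ⟨j, Set.mem_range_self x⟩))
  let φ' : ∀ j, (S j).carrier →ₙ* C'.carrier :=
    fun j => (φ j).codRestrict K (hmem j)
  have hcont' : ∀ j, Continuous ⇑(φ' j) :=
    fun j => Continuous.subtype_mk (h.cont j) _
  obtain ⟨Ψ', ⟨hΨ'c, hΨ'φ⟩, -⟩ := h.universal C' hproV' φ' hcont'
  obtain ⟨Φ, -, hΦuniq⟩ := h.universal C h.proV φ h.cont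
  have h1 : (MulMemClass.subtype K).comp Ψ' = Φ := by
    refine hΦuniq _ ⟨@Continuous.comp C.carrier ↥K C.carrier _ _ _ _ _
      continuous_subtype_val hΨ'c, fun j => ?_⟩
    rw [MulHom.comp_assoc, hΨ'φ j]
    ext x; rfl
  have h2 : MulHom.id C.carrier = Φ :=
    hΦuniq _ ⟨continuous_id, fun j => MulHom.id_comp (φ j)⟩
  intro c
  have h3 := DFunLike.congr_fun (h1.trans h2.symm) c
  simp only [MulHom.comp_apply, MulHom.id_apply] at h3
  have hcK : c ∈ K := by rw [← h3]; exact (Ψ' c).2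
  exact hcK

private def auxFam {I : Type} [DecidableEq I] (S : I → TopSgr) (i : I) {W : Type}
    [SemigroupWithZero W] (ψi : (S i).carrier →ₙ* W) (j : I) : (S j).carrier →ₙ* W :=
  if hj : j = i then hj.symm ▸ ψi
  else ⟨fun _ => 0, fun _ _ => (mul_zero 0).symm⟩

private lemma auxFam_i {I : Type} [DecidableEq I] (S : I → TopSgr) (i : I) {W : Type}
    [SemigroupWithZero W] (ψi : (S i).carrier →ₙ* W) : auxFam S i ψi i = ψi := by
  simp only [auxFam]
  exact dif_pos trivial

private lemma auxFam_ne_apply {I : Type} [DecidableEq I] (S : I → TopSgr) (i : I) {W : Type}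
    [SemigroupWithZero W] (ψi : (S i).carrier →ₙ* W) {j : I} (hj : j ≠ i)
    (x : (S j).carrier) : auxFam S i ψi j x = 0 := by
  simp only [auxFam, dif_neg hj]
  rfl

/-- Traces of generating sets of a `V`-coproduct on the factors generate
the factors, when `V` contains `Sl` and the factors are nontrivial. -/
theorem traces_of_generating_sets (V : Pseudovariety) (hSl : ContainsSl V)
    {I : Type} [Nonempty I] (S : I → TopSgr) (hS : ∀ i, IsProV V (S i))
    (hnt : ∀ i, Nontrivial (S i).carrier)
    (C : TopSgr) (φ : ∀ i, (S i).carrier →ₙ* C.carrier) (h : IsCoproduct V S C φ)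
    (A : Set C.carrier) (hA : Dense (Subsemigroup.closure A : Set C.carrier)) (i : I) :
    Dense (Subsemigroup.closure (⇑(φ i) ⁻¹' A) : Set (S i).carrier) := by
  classical
  obtain ⟨hCc, hCt2, hCm, -⟩ := h.proV
  haveI := hCc; haveI := hCt2; haveI := hCm
  obtain ⟨hic, hit2, him, -⟩ := hS i
  haveI := hic; haveI := hit2; haveI := him
  by_contra hnd
  unfold Dense at hnd
  push_neg at hnd
  obtain ⟨x₀, hx₀⟩ := hnd
  set P : Set (S i).carrier := ⇑(φ i) ⁻¹' A with hP
  set D : Subsemigroup (S i).carrier := (Subsemigroup.closure P).topologicalClosure with hD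
  have hx₀D : x₀ ∉ (D : Set (S i).carrier) := hx₀
  obtain ⟨F, f, hfc, hfsep⟩ := aux_sep V (S i) (hS i) (D : Set (S i).carrier)
    ((Subsemigroup.closure P).isClosed_topologicalClosure) x₀ hx₀D
  haveI : Nonempty F.carrier := ⟨f x₀⟩
  haveI hFfin : Finite F.carrier := V.finite _ F.mem
  haveI : Fintype F.carrier := Fintype.ofFinite _
  haveI hWZfin : Finite (WithZero F.carrier) := Finite.of_equiv (Option F.carrier) (Equiv.refl _)
  have memWZ : V.Mem (WithZero F.carrier) := aux_withZero_mem V hSl F.carrier F.mem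
  haveI hdT : DiscreteTopology (discTopSgr (WithZero F.carrier)).carrier := ⟨rfl⟩
  have hTproV : IsProV V (discTopSgr (WithZero F.carrier)) := by
    refine ⟨?_, ?_, ?_, ?_⟩
    · haveI : Finite (discTopSgr (WithZero F.carrier)).carrier := hWZfin
      exact Finite.compactSpace
    · exact DiscreteTopology.toT2Space
    · haveI : DiscreteTopology ((discTopSgr (WithZero F.carrier)).carrier ×
        (discTopSgr (WithZero F.carrier)).carrier) := inferInstance
      exact ⟨continuous_of_discreteTopology⟩
    · intro x y hxy
      exact ⟨⟨WithZero F.carrier, memWZ⟩, MulHom.id _, continuous_bot, hxy⟩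
  let ψi : (S i).carrier →ₙ* WithZero F.carrier :=
    ⟨fun x => ((f x : F.carrier) : WithZero F.carrier), fun x y => by
      show ((f (x * y) : F.carrier) : WithZero F.carrier) = ↑(f x) * ↑(f y)
      rw [map_mul, WithZero.coe_mul]⟩
  have hψicont : @Continuous _ _ (S i).top ⊥ ⇑ψi := by
    have hco : @Continuous F.carrier (WithZero F.carrier) ⊥ ⊥
        (fun y => (y : WithZero F.carrier)) := continuous_bot
    exact @Continuous.comp (S i).carrier F.carrier (WithZero F.carrier)
      (S i).top ⊥ ⊥ _ _ hco hfc
  have hψcont : ∀ j, @Continuous _ _ (S j).top ⊥ ⇑(auxFam S i ψi j) := by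
    intro j
    by_cases hj : j = i
    · subst hj
      rw [auxFam_i]
      exact hψicont
    · have hz : ⇑(auxFam S i ψi j) = fun _ => (0 : WithZero F.carrier) :=
        funext fun x => auxFam_ne_apply S i ψi hj x
      rw [hz]
      exact @continuous_const _ _ (S j).top ⊥ 0
  obtain ⟨Ψ₀, ⟨hΨc₀, hΨφ₀⟩, -⟩ :=
    h.universal (discTopSgr (WithZero F.carrier)) hTproV (auxFam S i ψi) hψcont
  have hΨd : ∃ Ψ : C.carrier →ₙ* WithZero F.carrier,
      (@Continuous _ _ C.top ⊥ ⇑Ψ) ∧ ∀ j, Ψ.comp (φ j) = auxFam S i ψi j :=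
    ⟨Ψ₀, hΨc₀, hΨφ₀⟩
  obtain ⟨Ψ, hΨc, hΨφ⟩ := hΨd
  have hΨi : ∀ x, Ψ (φ i x) = ((f x : F.carrier) : WithZero F.carrier) := by
    intro x
    have h4 := hΨφ i
    rw [auxFam_i] at h4
    exact DFunLike.congr_fun h4 x
  have hΨj : ∀ j, j ≠ i → ∀ x, Ψ (φ j x) = 0 := by
    intro j hj x
    have h4 := DFunLike.congr_fun (hΨφ j) x
    exact h4.trans (auxFam_ne_apply S i ψi hj x)
  have hrange : IsClosed (Set.range ⇑(φ i)) := (isCompact_range (h.cont i)).isClosed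
  let Wsub : Subsemigroup C.carrier :=
    { carrier := {w | Ψ w = 0 ∨ w ∈ Set.range ⇑(φ i)},
      mul_mem' := by
        rintro a b (ha | ⟨xa, rfl⟩) hb
        · exact Or.inl (by rw [map_mul, ha, zero_mul])
        · rcases hb with hb | ⟨xb, rfl⟩
          · exact Or.inl (by rw [map_mul, hb, mul_zero])
          · exact Or.inr ⟨xa * xb, map_mul (φ i) xa xb⟩ }
  have hsubW : Subsemigroup.closure (⋃ j, Set.range ⇑(φ j)) ≤ Wsub := by
    rw [Subsemigroup.closure_le]
    intro w hw
    obtain ⟨j, hj⟩ := Set.mem_iUnion.mp hw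
    obtain ⟨x, rfl⟩ := hj
    by_cases hji : j = i
    · subst hji
      exact Or.inr ⟨x, rfl⟩
    · exact Or.inl (hΨj j hji x)
  have hA' : ∀ c : C.carrier, Ψ c ≠ 0 → c ∈ Set.range ⇑(φ i) := by
    intro c hc
    have hgen := aux_coproduct_gen V S C φ h
    have hUopen : IsOpen (⇑Ψ ⁻¹' {(0 : WithZero F.carrier)}ᶜ) := by
      letI : TopologicalSpace (WithZero F.carrier) := ⊥
      haveI : DiscreteTopology (WithZero F.carrier) := ⟨rfl⟩
      exact IsOpen.preimage hΨc (isOpen_discrete _)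
    have hcl : c ∈ closure ((⇑Ψ ⁻¹' {(0 : WithZero F.carrier)}ᶜ) ∩
        ↑(Subsemigroup.closure (⋃ j, Set.range ⇑(φ j)))) := by
      rw [mem_closure_iff]
      intro O hO hcO
      obtain ⟨w, ⟨hwO, hwU⟩, hwN⟩ := hgen.inter_open_nonempty
        (O ∩ (⇑Ψ ⁻¹' {(0 : WithZero F.carrier)}ᶜ)) (hO.inter hUopen) ⟨c, hcO, hc⟩
      exact ⟨w, hwO, hwU, hwN⟩
    refine closure_minimal ?_ hrange hcl
    rintro w ⟨hwU, hwN⟩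
    rcases hsubW hwN with h0 | hr
    · exact absurd h0 hwU
    · exact hr
  let Qsub : Subsemigroup (WithZero F.carrier) :=
    { carrier := {0} ∪ (fun d => ((f d : F.carrier) : WithZero F.carrier)) ''
        (D : Set (S i).carrier),
      mul_mem' := by
        rintro a b (rfl | ⟨da, hda, rfl⟩) hb
        · exact Or.inl (by rw [zero_mul]; rfl)
        · rcases hb with rfl | ⟨db, hdb, rfl⟩
          · exact Or.inl (by rw [mul_zero]; rfl)
          · refine Or.inr ⟨da * db, D.mul_mem hda hdb, ?_⟩
            show ((f (da * db) : F.carrier) : WithZero F.carrier) = ↑(f da) * ↑(f db)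
            rw [map_mul, WithZero.coe_mul] }
  have hAQ : A ⊆ ⇑Ψ ⁻¹' (Qsub : Set (WithZero F.carrier)) := by
    intro a ha
    by_cases h0 : Ψ a = 0
    · exact Or.inl h0
    · obtain ⟨x, rfl⟩ := hA' a h0
      refine Or.inr ⟨x, ?_, (hΨi x).symm⟩
      exact (Subsemigroup.closure P).le_topologicalClosure (Subsemigroup.subset_closure ha)
  have hclosA : (Subsemigroup.closure A : Set C.carrier) ⊆
      ⇑Ψ ⁻¹' (Qsub : Set (WithZero F.carrier)) := by
    have hle : Subsemigroup.closure A ≤ Qsub.comap Ψ := Subsemigroup.closure_le.mpr hAQ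
    exact fun x hx => hle hx
  have hcQpre : IsClosed (⇑Ψ ⁻¹' (Qsub : Set (WithZero F.carrier))) := by
    letI : TopologicalSpace (WithZero F.carrier) := ⊥
    haveI : DiscreteTopology (WithZero F.carrier) := ⟨rfl⟩
    exact IsClosed.preimage hΨc (isClosed_discrete _)
  have hfin : Ψ (φ i x₀) ∈ (Qsub : Set (WithZero F.carrier)) :=
    closure_minimal hclosA hcQpre (hA (φ i x₀))
  rw [hΨi x₀] at hfin
  rcases hfin with h0 | ⟨d, hd, heq⟩
  · exact WithZero.coe_ne_zero h0
  · exact hfsep d hd (WithZero.coe_inj.mp heq).symm
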